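/- Let m ≥ 5, and let r be an integer with 0 < r < m-2, gcd(r, m-2) = 1 and 2r ≠ m-2. Then for every integer x with |x| ≥ 2, one has P_m^{(r)}(x) > (m-2)/2, and exactly one of the two values P_m^{(r)}(1), P_m^{(r)}(-1) is ≤ (m-2)/2. Consequently the set {y ∈ ℤ : 0 < P_m^{(r)}(y) ≤ (m-2)/2} has exactly one element. -/
import Mathlib


/-- The generalized shifted `m`-gonal number of level `r` at `x`. -/
def shiftedPolygonal (m r x : ℤ) : ℤ := ((m - 2) * x ^ 2 - (m - 2 - 2 * r) * x) / 2

lemma two_mul_shifted (m r x : ℤ) :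
    2 * shiftedPolygonal m r x = (m - 2) * x ^ 2 - (m - 2 - 2 * r) * x := by
  unfold shiftedPolygonal
  have he : Even ((x - 1) * (x - 1 + 1)) := Int.even_mul_succ_self (x - 1)
  obtain ⟨k, hk⟩ := he
  have h : (2 : ℤ) ∣ (m - 2) * x ^ 2 - (m - 2 - 2 * r) * x :=
    ⟨(m - 2) * k + r * x, by linear_combination (m - 2) * hk⟩
  exact Int.mul_ediv_cancel' h

theorem stmt_8 (m r : ℤ) (hm : 5 ≤ m) (hr0 : 0 < r) (hr1 : r < m - 2)
    (hgcd : Int.gcd r (m - 2) = 1) (hne : 2 * r ≠ m - 2) :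
    (∀ x : ℤ, 2 ≤ |x| → m - 2 < 2 * shiftedPolygonal m r x) ∧
    (2 * shiftedPolygonal m r 1 ≤ m - 2 ↔ ¬ (2 * shiftedPolygonal m r (-1) ≤ m - 2)) ∧
    {y : ℤ | 0 < shiftedPolygonal m r y ∧ 2 * shiftedPolygonal m r y ≤ m - 2}.ncard = 1 := by
  have key : ∀ x : ℤ, 2 ≤ |x| → m - 2 < 2 * shiftedPolygonal m r x := by
    intro x hx
    rw [two_mul_shifted]
    have hm2 : (0 : ℤ) ≤ m - 2 := by linarith
    rcases le_or_gt 2 x with h2 | h2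
    · have hq : (1 : ℤ) ≤ x ^ 2 - x - 1 := by nlinarith
      nlinarith [mul_le_mul_of_nonneg_left hq hm2, mul_pos hr0 (show (0:ℤ) < x by linarith)]
    · have hx2 : x ≤ -2 := by
        rcases abs_cases x with ⟨h, _⟩ | ⟨h, _⟩ <;> omega
      have hq : (1 : ℤ) ≤ x ^ 2 + x - 1 := by nlinarith
      nlinarith [mul_le_mul_of_nonneg_left hq hm2,
        mul_lt_mul_of_neg_right hr1 (show x < 0 by linarith)]
  have h1 : 2 * shiftedPolygonal m r 1 = 2 * r := by rw [two_mul_shifted]; ring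
  have h2 : 2 * shiftedPolygonal m r (-1) = 2 * (m - 2 - r) := by
    rw [two_mul_shifted]; ring
  refine ⟨key, by rw [h1, h2]; omega, ?_⟩
  have hmem : ∀ y : ℤ, (0 < shiftedPolygonal m r y ∧ 2 * shiftedPolygonal m r y ≤ m - 2)
      ↔ (y = 1 ∧ 2 * r ≤ m - 2) ∨ (y = -1 ∧ m - 2 ≤ 2 * r) := by
    intro y
    constructor
    · rintro ⟨hp, hle⟩
      have hy : y = -1 ∨ y = 0 ∨ y = 1 := by
        by_contra h
        have : 2 ≤ |y| := by
          rcases abs_cases y with ⟨h', _⟩ | ⟨h', _⟩ <;> omega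
        have := key y this
        omega
      rcases hy with rfl | rfl | rfl
      · right; exact ⟨rfl, by omega⟩
      · exfalso
        have : 2 * shiftedPolygonal m r 0 = 0 := by rw [two_mul_shifted]; ring
        omega
      · left; exact ⟨rfl, by omega⟩
    · rintro (⟨rfl, h⟩ | ⟨rfl, h⟩) <;> constructor <;> omega
  rcases lt_or_gt_of_ne hne with hlt | hgt
  · have : {y : ℤ | 0 < shiftedPolygonal m r y ∧ 2 * shiftedPolygonal m r y ≤ m - 2} = {1} := by
      ext y
      simp only [Set.mem_setOf_eq, Set.mem_singleton_iff, hmem y]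
      omega
    rw [this]; simp
  · have : {y : ℤ | 0 < shiftedPolygonal m r y ∧ 2 * shiftedPolygonal m r y ≤ m - 2} = {-1} := by
      ext y
      simp only [Set.mem_setOf_eq, Set.mem_singleton_iff, hmem y]
      omega
    rw [this]; simp
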